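/- arXiv:1503.02268 — 2 statements merged into one kernel-verified Lean document; each statement's English description precedes it below -/
import Mathlib

section
/- For an admissible curve γ(x) = (x, y(x), z(x)) in G³₁, with curvature κ(x) = √|y''(x)² − z''(x)²| and torsion τ(x) = (y''(x)·z'''(x) − y'''(x)·z''(x))/κ(x)², the curve α(u) = (u, (u/6)(-cosh(2 ln u) + 2 sinh(2 ln u)), (u/6)(2 cosh(2 ln u) − sinh(2 ln u))) defined for u > 0 satisfies κ(u) = 1/u and τ(u) = -2/u. -/
noncomputable def yα : ℝ → ℝ := fun u =>
  u / 6 * (-(Real.cosh (2 * Real.log u)) + 2 * Real.sinh (2 * Real.log u))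

noncomputable def zα : ℝ → ℝ := fun u =>
  u / 6 * (2 * Real.cosh (2 * Real.log u) - Real.sinh (2 * Real.log u))

private lemma hd0 (c : ℝ) {u : ℝ} (hu : u ≠ 0) :
    HasDerivAt (fun x : ℝ => (x ^ 3 + c / x) / 12) ((3 * u ^ 2 - c / u ^ 2) / 12) u := by
  have h1 := (hasDerivAt_pow 3 u).add ((hasDerivAt_const u c).div (hasDerivAt_id u) hu)
  have := h1.div_const 12
  refine this.congr_deriv ?_
  push_cast [id]
  field_simp
  ring

private lemma hd1 (c : ℝ) {u : ℝ} (hu : u ≠ 0) :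
    HasDerivAt (fun x : ℝ => (3 * x ^ 2 - c / x ^ 2) / 12) ((6 * u + 2 * c / u ^ 3) / 12) u := by
  have h1 : HasDerivAt (fun x : ℝ => 3 * x ^ 2 - c / x ^ 2)
      (3 * ((2 : ℕ) * u ^ 1) - (0 * u ^ 2 - c * ((2 : ℕ) * u ^ 1)) / (u ^ 2) ^ 2) u := by
    exact ((hasDerivAt_pow 2 u).const_mul 3).sub
      ((hasDerivAt_const u c).div (hasDerivAt_pow 2 u) (pow_ne_zero 2 hu))
  have := h1.div_const 12
  refine this.congr_deriv ?_
  field_simp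
  ring

private lemma hd2 (c : ℝ) {u : ℝ} (hu : u ≠ 0) :
    HasDerivAt (fun x : ℝ => (6 * x + 2 * c / x ^ 3) / 12) ((6 - 6 * c / u ^ 4) / 12) u := by
  have h1 : HasDerivAt (fun x : ℝ => 6 * x + 2 * c / x ^ 3)
      (6 * 1 + (0 * u ^ 3 - 2 * c * ((3 : ℕ) * u ^ 2)) / (u ^ 3) ^ 2) u := by
    exact ((hasDerivAt_id u).const_mul 6).add
      ((hasDerivAt_const u (2 * c)).div (hasDerivAt_pow 3 u) (pow_ne_zero 3 hu))
  have := h1.div_const 12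
  refine this.congr_deriv ?_
  field_simp
  ring

private lemma ev1 (c : ℝ) {u : ℝ} (hu : u ≠ 0) :
    deriv (fun x : ℝ => (x ^ 3 + c / x) / 12)
      =ᶠ[nhds u] fun x => (3 * x ^ 2 - c / x ^ 2) / 12 := by
  filter_upwards [eventually_ne_nhds hu] with x hx
  exact (hd0 c hx).deriv

private lemma ev2 (c : ℝ) {u : ℝ} (hu : u ≠ 0) :
    deriv (deriv (fun x : ℝ => (x ^ 3 + c / x) / 12))
      =ᶠ[nhds u] fun x => (6 * x + 2 * c / x ^ 3) / 12 := by
  have h : ∀ v : ℝ, v ≠ 0 →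
      deriv (deriv (fun x : ℝ => (x ^ 3 + c / x) / 12)) v = (6 * v + 2 * c / v ^ 3) / 12 := by
    intro v hv
    rw [(ev1 c hv).deriv_eq]
    exact (hd1 c hv).deriv
  filter_upwards [eventually_ne_nhds hu] with x hx using h x hx

private lemma d2 (c : ℝ) {u : ℝ} (hu : u ≠ 0) :
    deriv (deriv (fun x : ℝ => (x ^ 3 + c / x) / 12)) u = (6 * u + 2 * c / u ^ 3) / 12 := by
  rw [(ev1 c hu).deriv_eq]
  exact (hd1 c hu).deriv

private lemma d3 (c : ℝ) {u : ℝ} (hu : u ≠ 0) :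
    deriv (deriv (deriv (fun x : ℝ => (x ^ 3 + c / x) / 12))) u = (6 - 6 * c / u ^ 4) / 12 := by
  rw [(ev2 c hu).deriv_eq]
  exact (hd2 c hu).deriv

private lemma yev {u : ℝ} (hu : 0 < u) :
    yα =ᶠ[nhds u] fun x => (x ^ 3 + (-3 : ℝ) / x) / 12 := by
  filter_upwards [eventually_gt_nhds hu] with x hx
  have hx0 : x ≠ 0 := ne_of_gt hx
  have he : Real.exp (2 * Real.log x) = x ^ 2 := by
    rw [mul_comm, Real.exp_mul, Real.exp_log hx]; norm_num
  have he' : Real.exp (-(2 * Real.log x)) = (x ^ 2)⁻¹ := by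
    rw [Real.exp_neg, he]
  simp only [yα, Real.cosh_eq, Real.sinh_eq, he, he']
  field_simp
  ring

private lemma zev {u : ℝ} (hu : 0 < u) :
    zα =ᶠ[nhds u] fun x => (x ^ 3 + (3 : ℝ) / x) / 12 := by
  filter_upwards [eventually_gt_nhds hu] with x hx
  have hx0 : x ≠ 0 := ne_of_gt hx
  have he : Real.exp (2 * Real.log x) = x ^ 2 := by
    rw [mul_comm, Real.exp_mul, Real.exp_log hx]; norm_num
  have he' : Real.exp (-(2 * Real.log x)) = (x ^ 2)⁻¹ := by
    rw [Real.exp_neg, he]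
  simp only [zα, Real.cosh_eq, Real.sinh_eq, he, he']
  field_simp
  ring

theorem stmt2 (u : ℝ) (hu : 0 < u) :
    Real.sqrt |(deriv (deriv yα) u) ^ 2 - (deriv (deriv zα) u) ^ 2| = 1 / u ∧
    (deriv (deriv yα) u * deriv (deriv (deriv zα)) u -
        deriv (deriv (deriv yα)) u * deriv (deriv zα) u) /
      (Real.sqrt |(deriv (deriv yα) u) ^ 2 - (deriv (deriv zα) u) ^ 2|) ^ 2 = -2 / u := by
  have hu0 : u ≠ 0 := ne_of_gt hu
  have hy := yev hu
  have hz := zev hu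
  have hy2 : deriv (deriv yα) u = (6 * u + 2 * (-3) / u ^ 3) / 12 := by
    rw [(hy.deriv.deriv).eq_of_nhds, d2 (-3) hu0]
  have hz2 : deriv (deriv zα) u = (6 * u + 2 * 3 / u ^ 3) / 12 := by
    rw [(hz.deriv.deriv).eq_of_nhds, d2 3 hu0]
  have hy3 : deriv (deriv (deriv yα)) u = (6 - 6 * (-3) / u ^ 4) / 12 := by
    rw [(hy.deriv.deriv.deriv).eq_of_nhds, d3 (-3) hu0]
  have hz3 : deriv (deriv (deriv zα)) u = (6 - 6 * 3 / u ^ 4) / 12 := by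
    rw [(hz.deriv.deriv.deriv).eq_of_nhds, d3 3 hu0]
  have hdiff : (deriv (deriv yα) u) ^ 2 - (deriv (deriv zα) u) ^ 2 = -(1 / u ^ 2) := by
    rw [hy2, hz2]; field_simp; ring
  have habs : |(deriv (deriv yα) u) ^ 2 - (deriv (deriv zα) u) ^ 2| = (1 / u) ^ 2 := by
    rw [hdiff, abs_neg, abs_of_nonneg (by positivity)]
    rw [one_div, one_div, inv_pow]
  have hsqrt : Real.sqrt |(deriv (deriv yα) u) ^ 2 - (deriv (deriv zα) u) ^ 2| = 1 / u := by
    rw [habs, Real.sqrt_sq (by positivity)]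
  refine ⟨hsqrt, ?_⟩
  rw [hsqrt, hy2, hz2, hy3, hz3]
  field_simp
  ring
end

section
/- Let τ : ℝ → ℝ be continuous, a ∈ ℝ a constant, and define the spacelike Salkowski curve γ(s) = (s, -a∫₀ˢ∫₀ᵗ sinh(T(u)) du dt, a∫₀ˢ∫₀ᵗ cosh(T(u)) du dt) with T(u) = ∫₀ᵘ τ. Then γ''(s) = (0, -a sinh(T(s)), a cosh(T(s))) and γ'''(s) = (0, -a τ(s) cosh(T(s)), a τ(s) sinh(T(s))); consequently the curvature κ(s) = √|(γ''₂)² − (γ''₃)²| = |a| is constant, and for a > 0 the torsion (γ''₂γ'''₃ − γ'''₂γ''₃)/κ² equals τ(s). -/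
theorem stmt17 (τ : ℝ → ℝ) (hτ : Continuous τ) (a : ℝ)
    (T : ℝ → ℝ) (hT : ∀ u, T u = ∫ v in (0:ℝ)..u, τ v)
    (γ₂ γ₃ : ℝ → ℝ)
    (hγ₂ : ∀ s, γ₂ s = -a * ∫ t in (0:ℝ)..s, ∫ u in (0:ℝ)..t, Real.sinh (T u))
    (hγ₃ : ∀ s, γ₃ s = a * ∫ t in (0:ℝ)..s, ∫ u in (0:ℝ)..t, Real.cosh (T u))
    (s : ℝ) :
    deriv (deriv γ₂) s = -a * Real.sinh (T s) ∧
    deriv (deriv γ₃) s = a * Real.cosh (T s) ∧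
    deriv (deriv (deriv γ₂)) s = -a * τ s * Real.cosh (T s) ∧
    deriv (deriv (deriv γ₃)) s = a * τ s * Real.sinh (T s) ∧
    Real.sqrt |(deriv (deriv γ₂) s) ^ 2 - (deriv (deriv γ₃) s) ^ 2| = |a| ∧
    (0 < a →
      (deriv (deriv γ₂) s * deriv (deriv (deriv γ₃)) s -
          deriv (deriv (deriv γ₂)) s * deriv (deriv γ₃) s) /
        (Real.sqrt |(deriv (deriv γ₂) s) ^ 2 - (deriv (deriv γ₃) s) ^ 2|) ^ 2 = τ s) := by
  -- continuity of T
  have hTc : Continuous T := by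
    have : Continuous fun u => ∫ v in (0:ℝ)..u, τ v :=
      intervalIntegral.continuous_primitive (fun _ _ => hτ.intervalIntegrable _ _) 0
    exact this.congr fun u => (hT u).symm
  have hsc : Continuous fun u => Real.sinh (T u) := Real.continuous_sinh.comp hTc
  have hcc : Continuous fun u => Real.cosh (T u) := Real.continuous_cosh.comp hTc
  -- T has derivative τ
  have hTd : ∀ u, HasDerivAt T (τ u) u := by
    intro u
    have : HasDerivAt (fun x => ∫ v in (0:ℝ)..x, τ v) (τ u) u := by
      exact intervalIntegral.integral_hasDerivAt_right (hτ.intervalIntegrable _ _)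
        (hτ.stronglyMeasurableAtFilter _ _) hτ.continuousAt
    exact this.congr_of_eventuallyEq (Filter.Eventually.of_forall fun x => hT x)
  -- inner primitives
  have hF₂ : ∀ t, deriv (fun x => ∫ u in (0:ℝ)..x, Real.sinh (T u)) t = Real.sinh (T t) :=
    fun t => Continuous.deriv_integral _ hsc 0 t
  have hF₃ : ∀ t, deriv (fun x => ∫ u in (0:ℝ)..x, Real.cosh (T u)) t = Real.cosh (T t) :=
    fun t => Continuous.deriv_integral _ hcc 0 t
  -- first derivatives
  have hF₂c : Continuous fun t => ∫ u in (0:ℝ)..t, Real.sinh (T u) :=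
    intervalIntegral.continuous_primitive (fun _ _ => hsc.intervalIntegrable _ _) 0
  have hF₃c : Continuous fun t => ∫ u in (0:ℝ)..t, Real.cosh (T u) :=
    intervalIntegral.continuous_primitive (fun _ _ => hcc.intervalIntegrable _ _) 0
  have hd2 : deriv γ₂ = fun t => -a * ∫ u in (0:ℝ)..t, Real.sinh (T u) := by
    funext t
    have h1 : HasDerivAt (fun x => ∫ r in (0:ℝ)..x, ∫ u in (0:ℝ)..r, Real.sinh (T u))
        (∫ u in (0:ℝ)..t, Real.sinh (T u)) t :=
      intervalIntegral.integral_hasDerivAt_right (hF₂c.intervalIntegrable _ _)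
        (hF₂c.stronglyMeasurableAtFilter _ _) hF₂c.continuousAt
    have h2 : HasDerivAt γ₂ (-a * ∫ u in (0:ℝ)..t, Real.sinh (T u)) t :=
      ((h1.const_mul (-a)).congr_of_eventuallyEq
        (Filter.Eventually.of_forall fun x => hγ₂ x))
    exact h2.deriv
  have hd3 : deriv γ₃ = fun t => a * ∫ u in (0:ℝ)..t, Real.cosh (T u) := by
    funext t
    have h1 : HasDerivAt (fun x => ∫ r in (0:ℝ)..x, ∫ u in (0:ℝ)..r, Real.cosh (T u))
        (∫ u in (0:ℝ)..t, Real.cosh (T u)) t :=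
      intervalIntegral.integral_hasDerivAt_right (hF₃c.intervalIntegrable _ _)
        (hF₃c.stronglyMeasurableAtFilter _ _) hF₃c.continuousAt
    exact ((h1.const_mul a).congr_of_eventuallyEq
      (Filter.Eventually.of_forall fun x => hγ₃ x)).deriv
  -- second derivatives
  have hdd2 : deriv (deriv γ₂) = fun t => -a * Real.sinh (T t) := by
    funext t
    rw [hd2]
    have h1 : HasDerivAt (fun x => ∫ u in (0:ℝ)..x, Real.sinh (T u)) (Real.sinh (T t)) t :=
      intervalIntegral.integral_hasDerivAt_right (hsc.intervalIntegrable _ _)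
        (hsc.stronglyMeasurableAtFilter _ _) hsc.continuousAt
    exact (h1.const_mul (-a)).deriv
  have hdd3 : deriv (deriv γ₃) = fun t => a * Real.cosh (T t) := by
    funext t
    rw [hd3]
    have h1 : HasDerivAt (fun x => ∫ u in (0:ℝ)..x, Real.cosh (T u)) (Real.cosh (T t)) t :=
      intervalIntegral.integral_hasDerivAt_right (hcc.intervalIntegrable _ _)
        (hcc.stronglyMeasurableAtFilter _ _) hcc.continuousAt
    exact (h1.const_mul a).deriv
  -- third derivatives
  have hddd2 : deriv (deriv (deriv γ₂)) s = -a * τ s * Real.cosh (T s) := by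
    rw [hdd2]
    have h1 : HasDerivAt (fun t => Real.sinh (T t)) (Real.cosh (T s) * τ s) s :=
      (Real.hasDerivAt_sinh (T s)).comp s (hTd s)
    have := (h1.const_mul (-a)).deriv
    rw [this]; ring
  have hddd3 : deriv (deriv (deriv γ₃)) s = a * τ s * Real.sinh (T s) := by
    rw [hdd3]
    have h1 : HasDerivAt (fun t => Real.cosh (T t)) (Real.sinh (T s) * τ s) s :=
      (Real.hasDerivAt_cosh (T s)).comp s (hTd s)
    have := (h1.const_mul a).deriv
    rw [this]; ring
  have e2 : deriv (deriv γ₂) s = -a * Real.sinh (T s) := by rw [hdd2]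
  have e3 : deriv (deriv γ₃) s = a * Real.cosh (T s) := by rw [hdd3]
  have hκ : Real.sqrt |(deriv (deriv γ₂) s) ^ 2 - (deriv (deriv γ₃) s) ^ 2| = |a| := by
    rw [e2, e3]
    have h : (-a * Real.sinh (T s)) ^ 2 - (a * Real.cosh (T s)) ^ 2 = -(a ^ 2) := by
      have := Real.cosh_sq_sub_sinh_sq (T s); nlinarith [this]
    rw [h, abs_neg, abs_of_nonneg (sq_nonneg a), Real.sqrt_sq_eq_abs]
  refine ⟨e2, e3, hddd2, hddd3, hκ, fun ha => ?_⟩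
  rw [hκ, e2, e3, hddd2, hddd3, sq_abs]
  have h : -a * Real.sinh (T s) * (a * τ s * Real.sinh (T s)) -
      -a * τ s * Real.cosh (T s) * (a * Real.cosh (T s)) = a ^ 2 * τ s := by
    have h0 := Real.cosh_sq_sub_sinh_sq (T s); linear_combination a ^ 2 * τ s * h0
  rw [h]
  field_simp [ne_of_gt ha]
end
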